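/- For every simple pMC D over a finite parameter set X with n states and target set T, there exists a simple pMC D' over X with n + 2·|X| states and the same target set T such that: for every graph-preserving valuation val : X → (0,1), Pr_{D'[val]}(◇T) = Pr_{D[val]}(◇T), and for every well-defined valuation val : X → [0,1] that is not graph-preserving (i.e., val x ∈ {0,1} for some x ∈ X), Pr_{D'[val]}(◇T) = 0. -/

import Mathlib

/-- A finite path in state space `S`: a length `m` together with `m + 1` states. -/
abbrev MCPath (S : Type) : Type := Σ m : ℕ, Fin (m + 1) → S

/-- The mass of a path: the product of the transition probabilities along it. -/
def pathMass {S : Type} (P : S → S → ℝ) (π : MCPath S) : ℝ :=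
  ∏ i : Fin π.1, P (π.2 i.castSucc) (π.2 i.succ)

/-- A hitting path from `s` to `T`: it starts in `s`, ends in `T`, and no proper prefix
visits `T`. -/
def IsHitting {S : Type} (T : Set S) (s : S) (π : MCPath S) : Prop :=
  π.2 0 = s ∧ π.2 (Fin.last π.1) ∈ T ∧ ∀ i : Fin π.1, π.2 i.castSucc ∉ T

/-- The reachability probability `Pr_{P,s}(◇T)`: the sum of the masses of all hitting
paths from `s` to `T`. -/
noncomputable def reachProb {S : Type} (P : S → S → ℝ) (T : Set S) (s : S) : ℝ :=
  ∑' π : {π : MCPath S // IsHitting T s π}, pathMass P π.1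

/-- An entry of a simple pMC: a nonnegative rational constant, a variable `x`, or `1 - x`. -/
def SimpleEntry {X : Type} (p : MvPolynomial X ℚ) : Prop :=
  (∃ q : ℚ, 0 ≤ q ∧ p = MvPolynomial.C q) ∨
  (∃ x : X, p = MvPolynomial.X x) ∨
  (∃ x : X, p = 1 - MvPolynomial.X x)

/-- A simple parametric Markov chain over parameter set `X` with `n` states:
all transition polynomials are simple entries and every row sums to `1` as a polynomial. -/
structure SimplePMC (X : Type) (n : ℕ) where
  init : Fin n
  P : Fin n → Fin n → MvPolynomial X ℚ
  simple : ∀ s s', SimpleEntry (P s s')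
  rowSum : ∀ s, ∑ s', P s s' = 1

/-- A valuation is well-defined if every parameter value lies in `[0,1]`. -/
def WDVal {X : Type} (val : X → ℝ) : Prop := ∀ x, val x ∈ Set.Icc (0 : ℝ) 1

/-- A valuation is graph-preserving if every parameter value lies in `(0,1)`. -/
def GPVal {X : Type} (val : X → ℝ) : Prop := ∀ x, val x ∈ Set.Ioo (0 : ℝ) 1

/-- The transition matrix of the instantiation `D[val]`. -/
noncomputable def instP {X : Type} {n : ℕ} (D : SimplePMC X n) (val : X → ℝ) :
    Fin n → Fin n → ℝ :=
  fun s s' => MvPolynomial.aeval val (D.P s s')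

open ENNReal in
noncomputable def eMass {S : Type} (P : S → S → ℝ≥0∞) (π : MCPath S) : ℝ≥0∞ :=
  ∏ i : Fin π.1, P (π.2 i.castSucc) (π.2 i.succ)

open ENNReal in
noncomputable def eReach {S : Type} (P : S → S → ℝ≥0∞) (T : Set S) (s : S) : ℝ≥0∞ :=
  ∑' π : {π : MCPath S // IsHitting T s π}, eMass P π.1

/-- evaluation of a path at a natural index, with junk value the start state. -/
def pev {S : Type} (σ : MCPath S) (j : ℕ) : S :=
  if h : j < σ.1 + 1 then σ.2 ⟨j, h⟩ else σ.2 0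

lemma pev_lt {S : Type} (σ : MCPath S) {j : ℕ} (h : j < σ.1 + 1) :
    pev σ j = σ.2 ⟨j, h⟩ := by simp [pev, h]

lemma mcpath_ext {S : Type} {σ σ' : MCPath S} (h1 : σ.1 = σ'.1)
    (h2 : ∀ j, pev σ j = pev σ' j) : σ = σ' := by
  obtain ⟨L, f⟩ := σ; obtain ⟨L', f'⟩ := σ'
  dsimp at h1; subst h1
  have : f = f' := by
    funext i
    have := h2 i.val
    rwa [pev_lt _ i.isLt, pev_lt _ i.isLt] at this
  rw [this]

open ENNReal in
lemma reach_toReal {S : Type} (P : S → S → ℝ) (hP : ∀ a b, 0 ≤ P a b) (T : Set S) (s : S) :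
    reachProb P T s = (eReach (fun a b => ENNReal.ofReal (P a b)) T s).toReal := by
  rw [reachProb, eReach]
  have key : ∀ π : MCPath S, eMass (fun a b => ENNReal.ofReal (P a b)) π
      = ENNReal.ofReal (pathMass P π) := fun π =>
    (ENNReal.ofReal_prod_of_nonneg (fun i _ => hP _ _)).symm
  have h2 : (∑' π : {π : MCPath S // IsHitting T s π},
      eMass (fun a b => ENNReal.ofReal (P a b)) π.1)
      = ∑' π : {π : MCPath S // IsHitting T s π}, ENNReal.ofReal (pathMass P π.1) :=
    tsum_congr fun π => key π.1
  rw [h2, ENNReal.tsum_toReal_eq (fun _ => ENNReal.ofReal_ne_top)]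
  exact (tsum_congr fun π => (ENNReal.toReal_ofReal
    (Finset.prod_nonneg fun i _ => hP _ _))).symm

open ENNReal in
lemma geom_one {a : ℝ} (h0 : 0 ≤ a) (h1 : a < 1) :
    (∑' k : ℕ, (ENNReal.ofReal a) ^ k * ENNReal.ofReal (1 - a)) = 1 := by
  rw [ENNReal.tsum_mul_right, ENNReal.tsum_geometric,
    ENNReal.ofReal_sub _ h0, ENNReal.ofReal_one]
  have ha : ENNReal.ofReal a < 1 := by
    rw [← ENNReal.ofReal_one]; exact ENNReal.ofReal_lt_ofReal_iff_of_nonneg h0 |>.mpr h1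
  refine ENNReal.inv_mul_cancel ?_ ?_
  · simpa [tsub_eq_zero_iff_le] using ha.not_ge
  · exact (tsub_le_self.trans_lt ENNReal.one_lt_top).ne

open ENNReal in
lemma eMass_factor_ne_zero {S : Type} {P : S → S → ℝ≥0∞} {π : MCPath S}
    (h : eMass P π ≠ 0) (i : Fin π.1) : P (π.2 i.castSucc) (π.2 i.succ) ≠ 0 := by
  intro h0
  exact h (Finset.prod_eq_zero (Finset.mem_univ i) h0)

open ENNReal in
lemma eReach_embed {S₁ S₂ : Type} (φ : S₁ → S₂) (hφ : Function.Injective φ)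
    (P₁ : S₁ → S₁ → ℝ≥0∞) (P₂ : S₂ → S₂ → ℝ≥0∞)
    (hP : ∀ a b, P₂ (φ a) (φ b) = P₁ a b)
    (hz : ∀ a u, (∀ b, u ≠ φ b) → P₂ (φ a) u = 0)
    (T : Set S₁) (s : S₁) :
    eReach P₂ (φ '' T) (φ s) = eReach P₁ T s := by
  classical
  -- the embedding of paths
  have embHit : ∀ π : MCPath S₁, IsHitting T s π →
      IsHitting (φ '' T) (φ s) ⟨π.1, φ ∘ π.2⟩ := by
    rintro π ⟨h0, hl, hm⟩
    refine ⟨by simp [h0], ⟨π.2 (Fin.last π.1), hl, rfl⟩, ?_⟩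
    rintro i ⟨b, hbT, hb⟩
    exact hm i (hφ hb ▸ hbT)
  set emb : {π : MCPath S₁ // IsHitting T s π} →
      {π : MCPath S₂ // IsHitting (φ '' T) (φ s) π} :=
    fun π => ⟨⟨π.1.1, φ ∘ π.1.2⟩, embHit π.1 π.2⟩ with hemb
  have hmass : ∀ π : {π : MCPath S₁ // IsHitting T s π},
      eMass P₂ (emb π).1 = eMass P₁ π.1 := by
    intro π
    exact Finset.prod_congr rfl fun i _ => hP _ _
  rw [eReach, eReach]
  refine tsum_eq_tsum_of_ne_zero_bij (fun x => emb x.1) ?_ ?_ ?_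
  · -- injective
    intro x y h
    have h' : (emb x.1).1 = (emb y.1).1 := congrArg Subtype.val h
    have hL := congrArg Sigma.fst h'
    have hx2 : ∀ z : {π : MCPath S₁ // IsHitting T s π}, ∀ j,
        pev (emb z).1 j = φ (pev z.1 j) := by
      intro z j
      by_cases hj : j < z.1.1 + 1
      · rw [pev_lt _ hj, pev_lt _ (show j < (emb z).1.1 + 1 from hj)]; rfl
      · simp only [pev]
        rw [dif_neg (show ¬ j < (emb z).1.1 + 1 from hj), dif_neg hj]; rfl
    have hpev : ∀ j, pev x.1.1 j = pev y.1.1 j := by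
      intro j
      refine hφ ?_
      rw [← hx2 x.1 j, ← hx2 y.1 j, h']
    exact Subtype.ext (Subtype.ext (mcpath_ext hL hpev))
  · -- support covered
    rintro ⟨ρ, hρ⟩ hne
    simp only [Function.mem_support] at hne
    have hlift : ∀ c (h : c < ρ.1 + 1), ∃ a, ρ.2 ⟨c, h⟩ = φ a := by
      intro c
      induction c with
      | zero =>
        intro h
        exact ⟨s, by have := hρ.1; rwa [show (⟨0, h⟩ : Fin (ρ.1+1)) = 0 from rfl]⟩
      | succ c ih =>
        intro h
        have hc : c < ρ.1 + 1 := Nat.lt_of_succ_lt h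
        have hcL : c < ρ.1 := Nat.lt_of_succ_lt_succ h
        obtain ⟨a, ha⟩ := ih hc
        have hfac := eMass_factor_ne_zero hne ⟨c, hcL⟩
        have hcs : (⟨c, hcL⟩ : Fin ρ.1).castSucc = ⟨c, hc⟩ := rfl
        have hss : (⟨c, hcL⟩ : Fin ρ.1).succ = ⟨c+1, h⟩ := rfl
        rw [hcs, hss, ha] at hfac
        by_contra hno
        push_neg at hno
        exact hfac (hz a _ fun b hb => hno b hb)
    set π₁ : MCPath S₁ := ⟨ρ.1, fun j => Classical.choose (hlift j.1 j.2)⟩ with hπ₁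
    have hspec : ∀ j : Fin (ρ.1 + 1), ρ.2 j = φ (π₁.2 j) := by
      intro j
      have := Classical.choose_spec (hlift j.1 j.2)
      simpa [hπ₁] using this
    have hhit : IsHitting T s π₁ := by
      refine ⟨?_, ?_, ?_⟩
      · apply hφ; rw [← hspec 0]; exact hρ.1
      · obtain ⟨b, hbT, hb⟩ := hρ.2.1
        have := (hspec (Fin.last ρ.1)).symm.trans hb.symm
        exact hφ this ▸ hbT
      · intro i hiT
        exact hρ.2.2 i ⟨π₁.2 i.castSucc, hiT, (hspec i.castSucc).symm⟩
    have hembρ : (emb ⟨π₁, hhit⟩).1 = ρ := by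
      refine mcpath_ext rfl ?_
      intro j
      by_cases hj : j < ρ.1 + 1
      · rw [pev_lt _ (show j < (emb ⟨π₁, hhit⟩).1.1 + 1 from hj), pev_lt _ hj]
        exact (hspec ⟨j, hj⟩).symm
      · simp only [pev]
        rw [dif_neg (show ¬ j < (emb ⟨π₁, hhit⟩).1.1 + 1 from hj), dif_neg hj]
        exact (hspec 0).symm
    have hmem : eMass P₁ π₁ ≠ 0 := by
      rw [← hmass ⟨π₁, hhit⟩, hembρ]; exact hne
    exact ⟨⟨⟨π₁, hhit⟩, hmem⟩, Subtype.ext hembρ⟩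
  · rintro ⟨x, hx⟩
    exact hmass x

/-- The path that loops `k` times at `s`, then moves and follows `π`. -/
def comb {S : Type} (s : S) (k : ℕ) (π : MCPath S) : MCPath S :=
  ⟨k + 1 + π.1, fun i => if h : (i : ℕ) < k + 1 then s
    else π.2 ⟨(i : ℕ) - (k + 1), by have := i.isLt; omega⟩⟩

section comb
variable {S : Type} {s : S} {k : ℕ} {π : MCPath S}

@[simp] lemma comb_fst : (comb s k π).1 = k + 1 + π.1 := rfl

lemma comb_apply_lt {i : Fin (k + 1 + π.1 + 1)} (h : (i : ℕ) < k + 1) :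
    (comb s k π).2 i = s := dif_pos h

lemma comb_apply_ge {i : Fin (k + 1 + π.1 + 1)} (h : ¬ (i : ℕ) < k + 1) :
    (comb s k π).2 i = π.2 ⟨(i : ℕ) - (k + 1), by have := i.isLt; omega⟩ := dif_neg h

lemma pev_comb_lt {j : ℕ} (hj : j < k + 1) : pev (comb s k π) j = s := by
  rw [pev_lt _ (show j < (comb s k π).1 + 1 by have : (comb s k π).1 = k+1+π.1 := rfl; omega)]
  exact comb_apply_lt hj

lemma pev_comb_mid {j : ℕ} (h1 : k + 1 ≤ j) (h2 : j < k + 1 + π.1 + 1) :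
    pev (comb s k π) j = π.2 ⟨j - (k + 1), by omega⟩ := by
  rw [pev_lt _ (show j < (comb s k π).1 + 1 from h2)]
  exact comb_apply_ge (show ¬ (j : ℕ) < k + 1 by omega)

lemma pev_comb_big {j : ℕ} (h : ¬ j < k + 1 + π.1 + 1) : pev (comb s k π) j = s := by
  rw [pev, dif_neg (show ¬ j < (comb s k π).1 + 1 from h)]
  exact comb_apply_lt (by simp)

lemma comb_hitting {T : Set S} {t : S} (hsT : s ∉ T) (hπ : IsHitting T t π) :
    IsHitting T s (comb s k π) := by
  refine ⟨comb_apply_lt (by simp), ?_, ?_⟩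
  · show (comb s k π).2 (Fin.last (k + 1 + π.1)) ∈ T
    rw [comb_apply_ge (by simp [Fin.last]; omega)]
    have he : (⟨((Fin.last (k + 1 + π.1)) : ℕ) - (k + 1), by simp [Fin.last]⟩ : Fin (π.1 + 1))
        = Fin.last π.1 := by
      rw [Fin.ext_iff]; simp [Fin.last]
    rw [he]; exact hπ.2.1
  · show ∀ i : Fin (k + 1 + π.1), (comb s k π).2 i.castSucc ∉ T
    intro i
    have hi : (i : ℕ) < k + 1 + π.1 := i.isLt
    by_cases h : (i : ℕ) < k + 1
    · rw [comb_apply_lt (show ((i.castSucc : Fin (k+1+π.1+1)) : ℕ) < k + 1 by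
        simpa using h)]
      exact hsT
    · rw [comb_apply_ge (show ¬ ((i.castSucc : Fin (k+1+π.1+1)) : ℕ) < k + 1 by
        simpa using h)]
      have he : (⟨((i.castSucc : Fin (k+1+π.1+1)) : ℕ) - (k + 1), by
          have : ((i.castSucc : Fin (k+1+π.1+1)) : ℕ) = (i : ℕ) := rfl
          omega⟩ : Fin (π.1 + 1))
          = ((⟨(i : ℕ) - (k + 1), by omega⟩ : Fin π.1)).castSucc := by
        rw [Fin.ext_iff]; simp
      rw [he]
      exact hπ.2.2 _

open ENNReal in
lemma comb_mass (P : S → S → ℝ≥0∞) {t : S} (hπ0 : π.2 0 = t) :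
    eMass P (comb s k π) = (P s s) ^ k * P s t * eMass P π := by
  show (∏ i : Fin (k + 1 + π.1), P ((comb s k π).2 i.castSucc) ((comb s k π).2 i.succ)) = _
  rw [Fin.prod_univ_add (f := fun i : Fin ((k+1) + π.1) =>
    P ((comb s k π).2 i.castSucc) ((comb s k π).2 i.succ))]
  have h1 : ∀ i : Fin (k + 1),
      P ((comb s k π).2 (Fin.castAdd π.1 i).castSucc) ((comb s k π).2 (Fin.castAdd π.1 i).succ)
      = if (i : ℕ) < k then P s s else P s t := by
    intro i
    have hi : (i : ℕ) < k + 1 := i.isLt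
    have e1 : (comb s k π).2 (Fin.castAdd π.1 i).castSucc = s :=
      comb_apply_lt (by simpa using hi)
    rw [e1]
    have hsv : (((Fin.castAdd π.1 i).succ : Fin (k+1+π.1+1)) : ℕ) = (i : ℕ) + 1 := by simp
    rcases lt_or_ge (i : ℕ) k with h | h
    · rw [comb_apply_lt (by omega), if_pos h]
    · have hik : (i : ℕ) = k := by omega
      rw [comb_apply_ge (by omega), if_neg (by omega), ← hπ0]
      exact congrArg (fun z => P s (π.2 z)) (by simp [Fin.ext_iff, hsv] <;> omega)
  rw [Finset.prod_congr rfl (fun i _ => h1 i)]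
  have h2 : ∀ j : Fin π.1,
      P ((comb s k π).2 (Fin.natAdd (k+1) j).castSucc) ((comb s k π).2 (Fin.natAdd (k+1) j).succ)
      = P (π.2 j.castSucc) (π.2 j.succ) := by
    intro j
    have hc : (((Fin.natAdd (k+1) j).castSucc : Fin (k+1+π.1+1)) : ℕ) = k + 1 + (j : ℕ) := by
      simp
    have hs : (((Fin.natAdd (k+1) j).succ : Fin (k+1+π.1+1)) : ℕ) = k + 1 + (j : ℕ) + 1 := by
      simp
    have e1 : (comb s k π).2 (Fin.natAdd (k+1) j).castSucc = π.2 j.castSucc := by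
      rw [comb_apply_ge (by omega)]
      exact congrArg π.2 (by rw [Fin.ext_iff]; simp only [hc, Fin.coe_castSucc]; omega)
    have e2 : (comb s k π).2 (Fin.natAdd (k+1) j).succ = π.2 j.succ := by
      rw [comb_apply_ge (by omega)]
      exact congrArg π.2 (by rw [Fin.ext_iff]; simp only [hs, Fin.val_succ]; omega)
    rw [e1, e2]
  rw [Finset.prod_congr rfl (fun j _ => h2 j)]
  have h3 : (∏ i : Fin (k + 1), if (i : ℕ) < k then P s s else P s t)
      = (P s s) ^ k * P s t := by
    rw [Fin.prod_univ_castSucc]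
    have hterm : ∀ i : Fin k,
        (if ((i.castSucc : Fin (k+1)) : ℕ) < k then P s s else P s t) = P s s :=
      fun i => if_pos (by simpa using i.isLt)
    rw [Finset.prod_congr rfl (fun i _ => hterm i), if_neg (by simp), Finset.prod_const]
    simp
  rw [h3, eMass]

end comb

open ENNReal in
lemma eReach_loop {S : Type} (P : S → S → ℝ≥0∞) (T : Set S) (s t : S)
    (hsT : s ∉ T) (hst : s ≠ t) (hz : ∀ u, u ≠ s → u ≠ t → P s u = 0) :
    eReach P T s = (∑' k : ℕ, (P s s) ^ k * P s t) * eReach P T t := by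
  classical
  have hRHS : (∑' k : ℕ, (P s s) ^ k * P s t) * eReach P T t
      = ∑' q : ℕ × {π : MCPath S // IsHitting T t π},
          (P s s) ^ q.1 * P s t * eMass P q.2.1 := by
    rw [eq_comm, ENNReal.tsum_prod']
    have : ∀ k : ℕ, (∑' π : {π : MCPath S // IsHitting T t π},
        (P s s) ^ k * P s t * eMass P π.1) = ((P s s) ^ k * P s t) * eReach P T t := by
      intro k
      rw [eReach, ← ENNReal.tsum_mul_left]
    rw [tsum_congr this, ENNReal.tsum_mul_right]
  rw [hRHS, eReach]
  refine tsum_eq_tsum_of_ne_zero_bij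
    (fun q => ⟨comb s q.1.1 q.1.2.1, comb_hitting hsT q.1.2.2⟩) ?_ ?_ ?_
  · -- injective
    intro q q' h
    have hC : comb s q.1.1 q.1.2.1 = comb s q'.1.1 q'.1.2.1 :=
      congrArg Subtype.val h
    have key : ∀ (k k' : ℕ) (π π' : MCPath S), π.2 0 = t →
        comb s k π = comb s k' π' → k < k' → False := by
      intro k k' π π' hπ0 hCe hkk
      have h1 := congrArg (fun σ => pev σ (k + 1)) hCe
      rw [pev_comb_mid (le_refl _) (by omega),
        pev_comb_lt (show k + 1 < k' + 1 by omega)] at h1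
      apply hst
      rw [← hπ0, ← h1]
      exact congrArg π.2 (by simp [Fin.ext_iff] <;> omega)
    have hk : q.1.1 = q'.1.1 := by
      rcases lt_trichotomy q.1.1 q'.1.1 with h' | h' | h'
      · exact absurd h' (fun h' => key _ _ _ _ q.1.2.2.1 hC h')
      · exact h'
      · exact absurd h' (fun h' => key _ _ _ _ q'.1.2.2.1 hC.symm h')
    have hL : q.1.2.1.1 = q'.1.2.1.1 := by
      have := congrArg Sigma.fst hC
      simp only [comb] at this
      omega
    have hπeq : q.1.2.1 = q'.1.2.1 := by
      refine mcpath_ext hL ?_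
      intro j
      by_cases hj : j < q.1.2.1.1 + 1
      · have h1 := congrArg (fun σ => pev σ (q.1.1 + 1 + j)) hC
        rw [pev_comb_mid (by omega) (by omega),
          pev_comb_mid (k := q'.1.1) (by omega) (by omega)] at h1
        rw [pev_lt _ hj, pev_lt _ (show j < q'.1.2.1.1 + 1 by omega)]
        refine (congrArg _ ?_).trans (h1.trans (congrArg _ ?_))
        · simp [Fin.ext_iff] <;> omega
        · simp [Fin.ext_iff] <;> omega
      · rw [pev, dif_neg hj, pev, dif_neg (show ¬ j < q'.1.2.1.1 + 1 by omega)]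
        rw [q.1.2.2.1, q'.1.2.2.1]
    exact Subtype.ext (Prod.ext hk (Subtype.ext hπeq))
  · -- support covered
    rintro ⟨ρ, hρ⟩ hne
    simp only [Function.mem_support] at hne
    obtain ⟨hρ0, hρl, hρm⟩ := hρ
    have hQL : pev ρ ρ.1 ≠ s := by
      rw [pev_lt _ (by omega)]
      intro hs
      apply hsT
      rw [← hs]
      have he : (⟨ρ.1, by omega⟩ : Fin (ρ.1 + 1)) = Fin.last ρ.1 := by
        rw [Fin.ext_iff]; simp [Fin.last]
      rw [he]; exact hρl
    have hex : ∃ j, pev ρ j ≠ s := ⟨ρ.1, hQL⟩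
    set K := Nat.find hex with hKdef
    have hK : pev ρ K ≠ s := Nat.find_spec hex
    have hmin : ∀ j, j < K → pev ρ j = s := by
      intro j hj
      by_contra hc
      exact Nat.lt_irrefl _ (lt_of_le_of_lt (Nat.find_min' hex hc) hj)
    have hK1 : 1 ≤ K := by
      rcases Nat.eq_zero_or_pos K with h | h
      · exfalso
        apply hK
        rw [h, pev_lt _ (by omega)]
        have he : (⟨0, by omega⟩ : Fin (ρ.1 + 1)) = 0 := rfl
        rw [he]; exact hρ0
      · exact h
    have hKL : K ≤ ρ.1 := Nat.find_min' hex hQL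
    have hL1 : 1 ≤ ρ.1 := le_trans hK1 hKL
    have hft : ρ.2 ⟨K, by omega⟩ = t := by
      have hfac := eMass_factor_ne_zero hne ⟨K - 1, by omega⟩
      have ec : ((⟨K - 1, by omega⟩ : Fin ρ.1).castSucc : Fin (ρ.1 + 1))
          = ⟨K - 1, by omega⟩ := by rw [Fin.ext_iff]; simp
      have es : ((⟨K - 1, by omega⟩ : Fin ρ.1).succ : Fin (ρ.1 + 1))
          = ⟨K, by omega⟩ := by rw [Fin.ext_iff]; simp; omega
      rw [ec, es] at hfac
      have hKs : ρ.2 ⟨K - 1, by omega⟩ = s := by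
        have := hmin (K - 1) (by omega)
        rwa [pev_lt _ (by omega)] at this
      rw [hKs] at hfac
      by_contra hnt
      apply hfac
      apply hz
      · have h2 := hK
        rwa [pev_lt _ (by omega)] at h2
      · exact hnt
    set π : MCPath S := ⟨ρ.1 - K, fun j => ρ.2 ⟨K + (j : ℕ), by have := j.isLt; omega⟩⟩
      with hπdef
    have hπ0 : π.2 0 = t := by
      rw [← hft]
      show ρ.2 _ = ρ.2 _
      exact congrArg ρ.2 (by simp [Fin.ext_iff] <;> omega)
    have hπhit : IsHitting T t π := by
      refine ⟨hπ0, ?_, ?_⟩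
      · show ρ.2 _ ∈ T
        have he : (⟨K + ((Fin.last (ρ.1 - K)) : ℕ), by simp [Fin.last]; omega⟩ : Fin (ρ.1 + 1))
            = Fin.last ρ.1 := by
          rw [Fin.ext_iff]; simp [Fin.last]; omega
        rw [he]; exact hρl
      · intro i
        show ρ.2 _ ∉ T
        have hi : (i : ℕ) < ρ.1 - K := i.isLt
        have he : (⟨K + ((i.castSucc : Fin (ρ.1 - K + 1)) : ℕ), by simp; omega⟩ : Fin (ρ.1 + 1))
            = ((⟨K + (i : ℕ), by omega⟩ : Fin ρ.1).castSucc) := by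
          rw [Fin.ext_iff]; simp
        rw [he]
        exact hρm _
    have hcomb : comb s (K - 1) π = ρ := by
      refine mcpath_ext (by show K - 1 + 1 + (ρ.1 - K) = ρ.1; omega) ?_
      intro j
      rcases lt_or_ge j K with hj | hj
      · rw [pev_comb_lt (by omega)]
        exact (hmin j hj).symm
      · by_cases hj2 : j < ρ.1 + 1
        · rw [pev_comb_mid (by omega) (by show j < K - 1 + 1 + (ρ.1 - K) + 1; omega)]
          rw [pev_lt _ hj2]
          show ρ.2 _ = ρ.2 _
          exact congrArg ρ.2 (by simp [Fin.ext_iff] <;> omega)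
        · rw [pev_comb_big (by show ¬ j < K - 1 + 1 + (ρ.1 - K) + 1; omega)]
          rw [pev, dif_neg hj2, hρ0]
    refine ⟨⟨(K - 1, ⟨π, hπhit⟩), ?_⟩, ?_⟩
    · simp only [Function.mem_support]
      intro h0
      apply hne
      rw [← hcomb, comb_mass P hπ0]
      exact h0
    · exact Subtype.ext hcomb
  · rintro ⟨q, hq⟩
    exact comb_mass P q.2.2.1

-- ===================== the gadget construction =====================

section gadget
variable {X : Type} [Fintype X] {n : ℕ}

/-- The parameter monitored by gadget state `j`. -/
noncomputable def par (j : Fin (2 * Fintype.card X)) : X :=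
  (Fintype.equivFin X).symm ⟨(j : ℕ) / 2, by have := j.isLt; omega⟩

/-- Self-loop polynomial of gadget state `j`. -/
noncomputable def selfP (j : Fin (2 * Fintype.card X)) : MvPolynomial X ℚ :=
  if (j : ℕ) % 2 = 0 then MvPolynomial.X (par j) else 1 - MvPolynomial.X (par j)

/-- Forward polynomial of gadget state `j`. -/
noncomputable def fwdP (j : Fin (2 * Fintype.card X)) : MvPolynomial X ℚ :=
  if (j : ℕ) % 2 = 0 then 1 - MvPolynomial.X (par j) else MvPolynomial.X (par j)

/-- Successor of gadget state `j`: the next gadget state, or the initial state of `D`. -/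
def nxt (D : SimplePMC X n) (j : Fin (2 * Fintype.card X)) : Fin (n + 2 * Fintype.card X) :=
  if h : (j : ℕ) + 1 < 2 * Fintype.card X then Fin.natAdd n ⟨(j : ℕ) + 1, h⟩
  else Fin.castAdd (2 * Fintype.card X) D.init

lemma nxt_ne (D : SimplePMC X n) (j : Fin (2 * Fintype.card X)) :
    nxt D j ≠ Fin.natAdd n j := by
  unfold nxt
  split
  · intro h; rw [Fin.ext_iff] at h; simp at h
  · intro h; rw [Fin.ext_iff] at h
    have := D.init.isLt
    simp at h
    omega

lemma fwdP_add_selfP (j : Fin (2 * Fintype.card X)) : fwdP j + selfP j = 1 := by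
  unfold fwdP selfP
  split_ifs <;> ring

lemma simpleEntry_zero : SimpleEntry (X := X) 0 :=
  Or.inl ⟨0, le_refl 0, (MvPolynomial.C_0).symm⟩

lemma selfP_simple (j : Fin (2 * Fintype.card X)) : SimpleEntry (selfP j) := by
  unfold selfP; split_ifs
  · exact Or.inr (Or.inl ⟨par j, rfl⟩)
  · exact Or.inr (Or.inr ⟨par j, rfl⟩)

lemma fwdP_simple (j : Fin (2 * Fintype.card X)) : SimpleEntry (fwdP j) := by
  unfold fwdP; split_ifs
  · exact Or.inr (Or.inr ⟨par j, rfl⟩)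
  · exact Or.inr (Or.inl ⟨par j, rfl⟩)

/-- The gadget pMC of Proposition 12. -/
noncomputable def gadget (D : SimplePMC X n) : SimplePMC X (n + 2 * Fintype.card X) where
  init := if h : 0 < 2 * Fintype.card X then Fin.natAdd n ⟨0, h⟩
    else Fin.castAdd (2 * Fintype.card X) D.init
  P := fun u t => Fin.addCases (motive := fun _ => MvPolynomial X ℚ)
    (fun s => Fin.addCases (motive := fun _ => MvPolynomial X ℚ)
      (fun t' => D.P s t') (fun _ => 0) t)
    (fun j => if t = nxt D j then fwdP j else if t = Fin.natAdd n j then selfP j else 0) u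
  simple := by
    intro u t
    refine Fin.addCases (motive := fun u => SimpleEntry
      (Fin.addCases (motive := fun _ => MvPolynomial X ℚ)
        (fun s => Fin.addCases (motive := fun _ => MvPolynomial X ℚ)
          (fun t' => D.P s t') (fun _ => 0) t)
        (fun j => if t = nxt D j then fwdP j
          else if t = Fin.natAdd n j then selfP j else 0) u)) ?_ ?_ u
    · intro s
      rw [Fin.addCases_left]
      refine Fin.addCases (motive := fun t => SimpleEntry
        (Fin.addCases (motive := fun _ => MvPolynomial X ℚ)
          (fun t' => D.P s t') (fun _ => 0) t)) ?_ ?_ t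
      · intro t'; rw [Fin.addCases_left]; exact D.simple s t'
      · intro j; rw [Fin.addCases_right]; exact simpleEntry_zero
    · intro j
      rw [Fin.addCases_right]
      split_ifs
      · exact fwdP_simple j
      · exact selfP_simple j
      · exact simpleEntry_zero
  rowSum := by
    intro u
    refine Fin.addCases (motive := fun u => (∑ t, Fin.addCases
      (motive := fun _ => MvPolynomial X ℚ)
      (fun s => Fin.addCases (motive := fun _ => MvPolynomial X ℚ)
        (fun t' => D.P s t') (fun _ => 0) t)
      (fun j => if t = nxt D j then fwdP j
        else if t = Fin.natAdd n j then selfP j else 0) u) = 1) ?_ ?_ u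
    · intro s
      have hs : ∀ t : Fin (n + 2 * Fintype.card X),
          Fin.addCases (motive := fun _ => MvPolynomial X ℚ)
            (fun s' => Fin.addCases (motive := fun _ => MvPolynomial X ℚ)
              (fun t' => D.P s' t') (fun _ => 0) t)
            (fun j => if t = nxt D j then fwdP j
              else if t = Fin.natAdd n j then selfP j else 0) (Fin.castAdd _ s)
          = Fin.addCases (motive := fun _ => MvPolynomial X ℚ)
              (fun t' => D.P s t') (fun _ => 0) t := fun t => by rw [Fin.addCases_left]
      rw [Finset.sum_congr rfl (fun t _ => hs t)]
      rw [Fin.sum_univ_add (f := fun t : Fin (n + 2 * Fintype.card X) =>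
        Fin.addCases (motive := fun _ => MvPolynomial X ℚ)
          (fun t' => D.P s t') (fun _ => 0) t)]
      simp only [Fin.addCases_left, Fin.addCases_right]
      rw [Finset.sum_const, smul_zero, add_zero, D.rowSum s]
    · intro j
      have hs : ∀ t : Fin (n + 2 * Fintype.card X),
          Fin.addCases (motive := fun _ => MvPolynomial X ℚ)
            (fun s' => Fin.addCases (motive := fun _ => MvPolynomial X ℚ)
              (fun t' => D.P s' t') (fun _ => 0) t)
            (fun j' => if t = nxt D j' then fwdP j'
              else if t = Fin.natAdd n j' then selfP j' else 0) (Fin.natAdd _ j)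
          = (if t = nxt D j then fwdP j else 0)
            + (if t = Fin.natAdd n j then selfP j else 0) := by
        intro t
        rw [Fin.addCases_right]
        by_cases h1 : t = nxt D j
        · rw [if_pos h1, if_pos h1, if_neg (by rw [h1]; exact nxt_ne D j), add_zero]
        · rw [if_neg h1, if_neg h1, zero_add]
      rw [Finset.sum_congr rfl (fun t _ => hs t), Finset.sum_add_distrib]
      rw [Finset.sum_ite_eq' Finset.univ (nxt D j) (fun _ => fwdP j),
        Finset.sum_ite_eq' Finset.univ (Fin.natAdd n j) (fun _ => selfP j)]
      simp only [Finset.mem_univ, if_true]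
      exact fwdP_add_selfP j

-- instantiation values of the gadget
lemma gadget_cc (D : SimplePMC X n) (val : X → ℝ) (s t : Fin n) :
    instP (gadget D) val (Fin.castAdd _ s) (Fin.castAdd _ t) = instP D val s t := by
  unfold instP gadget
  simp only [Fin.addCases_left]

lemma gadget_cn (D : SimplePMC X n) (val : X → ℝ) (s : Fin n)
    (j : Fin (2 * Fintype.card X)) :
    instP (gadget D) val (Fin.castAdd _ s) (Fin.natAdd n j) = 0 := by
  unfold instP gadget
  simp only [Fin.addCases_left, Fin.addCases_right, map_zero]

lemma gadget_n (D : SimplePMC X n) (val : X → ℝ) (j : Fin (2 * Fintype.card X))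
    (t : Fin (n + 2 * Fintype.card X)) :
    instP (gadget D) val (Fin.natAdd n j) t
      = if t = nxt D j then MvPolynomial.aeval val (fwdP j)
        else if t = Fin.natAdd n j then MvPolynomial.aeval val (selfP j) else 0 := by
  unfold instP gadget
  simp only [Fin.addCases_right]
  rw [apply_ite (MvPolynomial.aeval val), apply_ite (MvPolynomial.aeval val), map_zero]

lemma selfP_val (val : X → ℝ) (j : Fin (2 * Fintype.card X)) :
    MvPolynomial.aeval val (selfP j)
      = if (j : ℕ) % 2 = 0 then val (par j) else 1 - val (par j) := by
  unfold selfP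
  rw [apply_ite (MvPolynomial.aeval val)]
  simp [MvPolynomial.aeval_X]

lemma fwdP_val (val : X → ℝ) (j : Fin (2 * Fintype.card X)) :
    MvPolynomial.aeval val (fwdP j)
      = 1 - MvPolynomial.aeval val (selfP j) := by
  unfold fwdP
  rw [selfP_val, apply_ite (MvPolynomial.aeval val)]
  split_ifs <;> simp [MvPolynomial.aeval_X]

lemma instP_nonneg {k : ℕ} (E : SimplePMC X k) (val : X → ℝ) (h : WDVal val)
    (u t : Fin k) : 0 ≤ instP E val u t := by
  rcases E.simple u t with ⟨q, hq, hp⟩ | ⟨x, hp⟩ | ⟨x, hp⟩ <;> rw [instP, hp]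
  · rw [MvPolynomial.aeval_C, eq_ratCast]
    exact_mod_cast hq
  · rw [MvPolynomial.aeval_X]
    exact (h x).1
  · rw [map_sub, map_one, MvPolynomial.aeval_X]
    have := (h x).2
    linarith

end gadget



lemma fin_cases_add {a b : ℕ} (u : Fin (a + b)) :
    (∃ s : Fin a, u = Fin.castAdd b s) ∨ (∃ j : Fin b, u = Fin.natAdd a j) := by
  rcases lt_or_ge (u : ℕ) a with h | h
  · exact Or.inl ⟨⟨(u : ℕ), h⟩, by simp [Fin.ext_iff]⟩
  · refine Or.inr ⟨⟨(u : ℕ) - a, by have := u.isLt; omega⟩, ?_⟩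
    simp [Fin.ext_iff]
    omega

/-- Gadget construction of Proposition 12 of the paper: every simple pMC `D` with `n` states
and target set `T` can be extended to a simple pMC `D'` with `n + 2·|X|` states (and the same
target set, embedded) such that `D'` has the same reachability probability as `D` on every
graph-preserving valuation, and reachability probability `0` on every well-defined valuation
that is not graph-preserving. -/
theorem exists_gp_filter_gadget {X : Type} [Fintype X] {n : ℕ}
    (D : SimplePMC X n) (T : Set (Fin n)) :
    ∃ D' : SimplePMC X (n + 2 * Fintype.card X),
      (∀ val : X → ℝ, GPVal val →
        reachProb (instP D' val) (Fin.castAdd (2 * Fintype.card X) '' T) D'.init =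
          reachProb (instP D val) T D.init) ∧
      (∀ val : X → ℝ, WDVal val → (∃ x, val x = 0 ∨ val x = 1) →
        reachProb (instP D' val) (Fin.castAdd (2 * Fintype.card X) '' T) D'.init = 0) := by
  classical
  refine ⟨gadget D, ?_, ?_⟩
  · -- graph-preserving valuations
    intro val hgp
    have hwd : WDVal val := fun x => ⟨(hgp x).1.le, (hgp x).2.le⟩
    rw [reach_toReal _ (instP_nonneg (gadget D) val hwd),
        reach_toReal _ (instP_nonneg D val hwd)]
    congr 1
    have hinj : Function.Injective (Fin.castAdd (2*Fintype.card X) : Fin n → _) :=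
      fun a b h => Fin.ext (by simpa using congrArg Fin.val h)
    have hembed : ∀ s : Fin n,
        eReach (fun a b => ENNReal.ofReal (instP (gadget D) val a b))
            (Fin.castAdd (2*Fintype.card X) '' T) (Fin.castAdd (2*Fintype.card X) s)
          = eReach (fun a b => ENNReal.ofReal (instP D val a b)) T s := by
      intro s
      refine eReach_embed _ hinj _ _ ?_ ?_ T s
      · intro a b
        simp only [gadget_cc]
      · intro a u hu
        rcases fin_cases_add u with ⟨b, rfl⟩ | ⟨j, rfl⟩
        · exact absurd rfl (hu b)
        · simp only [gadget_cn, ENNReal.ofReal_zero]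
    have hstep : ∀ j : Fin (2*Fintype.card X),
        eReach (fun a b => ENNReal.ofReal (instP (gadget D) val a b))
            (Fin.castAdd (2*Fintype.card X) '' T) (Fin.natAdd n j)
          = eReach (fun a b => ENNReal.ofReal (instP (gadget D) val a b))
            (Fin.castAdd (2*Fintype.card X) '' T) (nxt D j) := by
      intro j
      have hsT : Fin.natAdd n j ∉ Fin.castAdd (2*Fintype.card X) '' T := by
        rintro ⟨b, _, hb⟩
        rw [Fin.ext_iff] at hb
        have := b.isLt
        simp at hb
        omega
      have hst : Fin.natAdd n j ≠ nxt D j := Ne.symm (nxt_ne D j)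
      have hzz : ∀ u, u ≠ Fin.natAdd n j → u ≠ nxt D j →
          (fun a b => ENNReal.ofReal (instP (gadget D) val a b)) (Fin.natAdd n j) u = 0 := by
        intro u h1 h2
        simp only [gadget_n, if_neg h2, if_neg h1, ENNReal.ofReal_zero]
      rw [eReach_loop _ _ _ _ hsT hst hzz]
      have hself : (fun a b => ENNReal.ofReal (instP (gadget D) val a b))
          (Fin.natAdd n j) (Fin.natAdd n j)
          = ENNReal.ofReal (MvPolynomial.aeval val (selfP j)) := by
        simp only [gadget_n]
        rw [if_neg (Ne.symm (nxt_ne D j))]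
        simp
      have hfwd : (fun a b => ENNReal.ofReal (instP (gadget D) val a b))
          (Fin.natAdd n j) (nxt D j)
          = ENNReal.ofReal (MvPolynomial.aeval val (fwdP j)) := by
        simp only [gadget_n]
        simp
      have hsv : MvPolynomial.aeval val (selfP j) ∈ Set.Ico (0:ℝ) 1 := by
        rw [selfP_val]
        rcases hgp (par j) with ⟨h1, h2⟩
        split_ifs <;> constructor <;> linarith
      have hgeom : (∑' k : ℕ, ((fun a b => ENNReal.ofReal (instP (gadget D) val a b))
          (Fin.natAdd n j) (Fin.natAdd n j)) ^ k
          * (fun a b => ENNReal.ofReal (instP (gadget D) val a b))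
            (Fin.natAdd n j) (nxt D j)) = 1 := by
        rw [tsum_congr (fun k => by rw [hself, hfwd, fwdP_val])]
        exact geom_one hsv.1 hsv.2
      rw [hgeom, one_mul]
    have hchain : ∀ d : ℕ, ∀ j : Fin (2*Fintype.card X),
        2*Fintype.card X ≤ (j:ℕ) + 1 + d →
        eReach (fun a b => ENNReal.ofReal (instP (gadget D) val a b))
            (Fin.castAdd (2*Fintype.card X) '' T) (Fin.natAdd n j)
          = eReach (fun a b => ENNReal.ofReal (instP D val a b)) T D.init := by
      intro d
      induction d with
      | zero =>
        intro j hj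
        have hn : nxt D j = Fin.castAdd (2*Fintype.card X) D.init :=
          dif_neg (by omega)
        rw [hstep j, hn, hembed]
      | succ d ih =>
        intro j hj
        by_cases h : (j:ℕ) + 1 < 2*Fintype.card X
        · have hn : nxt D j = Fin.natAdd n ⟨(j:ℕ)+1, h⟩ := dif_pos h
          rw [hstep j, hn]
          exact ih ⟨(j:ℕ)+1, h⟩ (by simp; omega)
        · have hn : nxt D j = Fin.castAdd (2*Fintype.card X) D.init := dif_neg h
          rw [hstep j, hn, hembed]
    by_cases hN : 0 < 2 * Fintype.card X
    · have hi : (gadget D).init = Fin.natAdd n ⟨0, hN⟩ := by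
        simp only [gadget]
        rw [dif_pos hN]
      rw [hi]
      exact hchain (2*Fintype.card X) ⟨0, hN⟩ (by simp)
    · have hi : (gadget D).init = Fin.castAdd (2*Fintype.card X) D.init := by
        simp only [gadget]
        rw [dif_neg hN]
      rw [hi]
      exact hembed D.init
  · -- non-graph-preserving valuations
    intro val hwd hx
    obtain ⟨x, hx⟩ := hx
    have hNpos : 0 < Fintype.card X := Fintype.card_pos_iff.mpr ⟨x⟩
    obtain ⟨jx, hjfv⟩ : ∃ jx : Fin (2*Fintype.card X),
        MvPolynomial.aeval val (fwdP jx) = 0 := by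
      set ix := (Fintype.equivFin X) x with hix
      have hlt : (ix : ℕ) < Fintype.card X := ix.isLt
      rcases hx with h0 | h1
      · refine ⟨⟨2*(ix:ℕ)+1, by omega⟩, ?_⟩
        have hpar : par (⟨2*(ix:ℕ)+1, by omega⟩ : Fin (2*Fintype.card X)) = x := by
          unfold par
          have he : (⟨((⟨2*(ix:ℕ)+1, by omega⟩ : Fin (2*Fintype.card X)) : ℕ)/2,
              by omega⟩ : Fin (Fintype.card X)) = ix := by
            simp [Fin.ext_iff]
            omega
          rw [he, hix]
          exact Equiv.symm_apply_apply _ _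
        rw [fwdP_val, selfP_val, if_neg (by simp), hpar, h0]
        ring
      · refine ⟨⟨2*(ix:ℕ), by omega⟩, ?_⟩
        have hpar : par (⟨2*(ix:ℕ), by omega⟩ : Fin (2*Fintype.card X)) = x := by
          unfold par
          have he : (⟨((⟨2*(ix:ℕ), by omega⟩ : Fin (2*Fintype.card X)) : ℕ)/2,
              by omega⟩ : Fin (Fintype.card X)) = ix := by
            simp [Fin.ext_iff] <;> omega
          rw [he, hix]
          exact Equiv.symm_apply_apply _ _
        rw [fwdP_val, selfP_val, if_pos (by simp), hpar, h1]
        ring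
    have hzero : ∀ π : {π : MCPath (Fin (n + 2*Fintype.card X)) //
        IsHitting (Fin.castAdd (2*Fintype.card X) '' T) (gadget D).init π},
        pathMass (instP (gadget D) val) π.1 = 0 := by
      rintro ⟨π, hπ⟩
      have hπ0 := hπ.1
      have hπl := hπ.2.1
      by_contra hm
      have hinv : ∀ c (hc : c < π.1 + 1), ∃ j' : Fin (2*Fintype.card X),
          (j' : ℕ) ≤ (jx : ℕ) ∧ π.2 ⟨c, hc⟩ = Fin.natAdd n j' := by
        intro c
        induction c with
        | zero =>
          intro hc
          refine ⟨⟨0, by omega⟩, by simp, ?_⟩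
          have h0 : (⟨0, hc⟩ : Fin (π.1+1)) = 0 := rfl
          rw [h0, hπ0]
          simp only [gadget]
          rw [dif_pos (by omega)]
        | succ c ih =>
          intro hc
          have hc' : c < π.1 + 1 := by omega
          have hcL : c < π.1 := by omega
          obtain ⟨j', hj'le, hj'⟩ := ih hc'
          have hfac : instP (gadget D) val (π.2 (⟨c, hcL⟩ : Fin π.1).castSucc)
              (π.2 (⟨c, hcL⟩ : Fin π.1).succ) ≠ 0 := by
            intro h0
            exact hm (Finset.prod_eq_zero (Finset.mem_univ (⟨c, hcL⟩ : Fin π.1)) h0)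
          have ecs : ((⟨c, hcL⟩ : Fin π.1).castSucc) = (⟨c, hc'⟩ : Fin (π.1+1)) := by
            simp [Fin.ext_iff]
          have ess : ((⟨c, hcL⟩ : Fin π.1).succ) = (⟨c+1, hc⟩ : Fin (π.1+1)) := by
            simp [Fin.ext_iff]
          rw [ecs, ess, hj', gadget_n] at hfac
          by_cases h1 : π.2 ⟨c+1, hc⟩ = nxt D j'
          · have hfwd : MvPolynomial.aeval val (fwdP j') ≠ 0 := by
              rw [if_pos h1] at hfac
              exact hfac
            have hjne : (j' : ℕ) ≠ (jx : ℕ) :=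
              fun h => hfwd (by rw [show j' = jx from Fin.ext h]; exact hjfv)
            have hlt2 : (j' : ℕ) + 1 < 2*Fintype.card X := by
              have := jx.isLt
              omega
            refine ⟨⟨(j':ℕ)+1, hlt2⟩, by simp; omega, ?_⟩
            rw [h1]
            unfold nxt
            rw [dif_pos hlt2]
          · by_cases h2 : π.2 ⟨c+1, hc⟩ = Fin.natAdd n j'
            · exact ⟨j', hj'le, h2⟩
            · rw [if_neg h1, if_neg h2] at hfac
              exact absurd rfl hfac
      obtain ⟨j', _, hj'⟩ := hinv π.1 (by omega)
      have hlast : (⟨π.1, by omega⟩ : Fin (π.1+1)) = Fin.last π.1 := by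
        simp [Fin.ext_iff, Fin.last]
      rw [hlast] at hj'
      obtain ⟨b, _, hb⟩ := hπl
      rw [← hb, Fin.ext_iff] at hj'
      have := b.isLt
      simp at hj'
      omega
    rw [reachProb]
    exact (tsum_congr hzero).trans tsum_zero
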